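/- Let (θ_n¹, x_n¹) and (θ_n², x_n²) both follow the noise-free 2D SLAM dynamics with the same inputs (ω_n, v_n), with fixed landmarks p¹ and p² respectively, and suppose that for some α ∈ ℝ and u ∈ ℝ² the initial conditions satisfy θ₀² = θ₀¹ + α, x₀² = R(α) x₀¹ + u, and p² = R(α) p¹ + u (a rotation and translation of the whole system). Then for every n ≥ 0: θ_n² = θ_n¹ + α, x_n² = R(α) x_n¹ + u, and R(θ_n²)ᵀ (p² − x_n²) = R(θ_n¹)ᵀ (p¹ − x_n¹). In particular, the relative landmark observations of the two trajectories coincide at all times, so rotations and translations of the global frame are unobservable transformations of the SLAM system. -/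

import Mathlib

open Matrix Real

/-- The 2×2 rotation matrix of angle `θ`. -/
noncomputable def Rmat (θ : ℝ) : Matrix (Fin 2) (Fin 2) ℝ :=
  !![Real.cos θ, -Real.sin θ; Real.sin θ, Real.cos θ]

/-- The matrix `J = [[0,-1],[1,0]]`. -/
def Jmat : Matrix (Fin 2) (Fin 2) ℝ := !![0, -1; 1, 0]

lemma Rmat_mul (a b : ℝ) : Rmat a * Rmat b = Rmat (a + b) := by
  simp [Rmat, Matrix.mul_fin_two, Real.cos_add, Real.sin_add]; ring_nf; simp

lemma Rmat_transpose_mul (a : ℝ) : (Rmat a)ᵀ * Rmat a = 1 := by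
  ext i j
  fin_cases i <;> fin_cases j <;>
    simp [Rmat, Matrix.vecHead, Matrix.vecTail, Matrix.transpose_apply, Matrix.mul_apply, Fin.sum_univ_two, Matrix.one_apply] <;>
      nlinarith [Real.sin_sq_add_cos_sq a]

/-- If two noise-free SLAM trajectories with the same inputs are related at
time `0` by a rotation `α` and a translation `u` of the global frame, then they are so related
at all times, and their relative landmark observations coincide at all times. -/
theorem statement9 (ω : ℕ → ℝ) (v : ℕ → Fin 2 → ℝ)
    (θ1 θ2 : ℕ → ℝ) (x1 x2 : ℕ → Fin 2 → ℝ) (p1 p2 : Fin 2 → ℝ) (α : ℝ) (u : Fin 2 → ℝ)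
    (h1θ : ∀ n, θ1 (n + 1) = θ1 n + ω (n + 1))
    (h1x : ∀ n, x1 (n + 1) = x1 n + (Rmat (θ1 n)).mulVec (v (n + 1)))
    (h2θ : ∀ n, θ2 (n + 1) = θ2 n + ω (n + 1))
    (h2x : ∀ n, x2 (n + 1) = x2 n + (Rmat (θ2 n)).mulVec (v (n + 1)))
    (hθ0 : θ2 0 = θ1 0 + α)
    (hx0 : x2 0 = (Rmat α).mulVec (x1 0) + u)
    (hp : p2 = (Rmat α).mulVec p1 + u) :
    ∀ n, θ2 n = θ1 n + α ∧ x2 n = (Rmat α).mulVec (x1 n) + u ∧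
      (Rmat (θ2 n))ᵀ.mulVec (p2 - x2 n) = (Rmat (θ1 n))ᵀ.mulVec (p1 - x1 n) := by
  have key : ∀ n, θ2 n = θ1 n + α ∧ x2 n = (Rmat α).mulVec (x1 n) + u := by
    intro n
    induction n with
    | zero => exact ⟨hθ0, hx0⟩
    | succ n ih =>
      obtain ⟨ht, hx⟩ := ih
      constructor
      · rw [h2θ, h1θ, ht]; ring
      · rw [h2x, h1x, ht, hx]
        have : Rmat (θ1 n + α) = Rmat α * Rmat (θ1 n) := by
          rw [Rmat_mul, add_comm]
        rw [this, Matrix.mulVec_add, ← Matrix.mulVec_mulVec]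
        abel
  intro n
  obtain ⟨ht, hx⟩ := key n
  refine ⟨ht, hx, ?_⟩
  rw [ht, hx, hp]
  have hdiff : (Rmat α).mulVec p1 + u - ((Rmat α).mulVec (x1 n) + u)
      = (Rmat α).mulVec (p1 - x1 n) := by
    rw [Matrix.mulVec_sub]; abel
  rw [hdiff]
  have : Rmat (θ1 n + α) = Rmat α * Rmat (θ1 n) := by rw [Rmat_mul, add_comm]
  have h2 : (Rmat α)ᵀ *ᵥ (Rmat α *ᵥ (p1 - x1 n)) = p1 - x1 n := by
    rw [Matrix.mulVec_mulVec, Rmat_transpose_mul, Matrix.one_mulVec]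
  rw [this, Matrix.transpose_mul, ← Matrix.mulVec_mulVec, h2]
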